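/- Fix real parameters 0 < α < γ and define μ, β, δ, k, x, z as in the unduloid setup. Then the unduloid has constant mean curvature: its two principal curvatures, namely the meridian curvature k₁(v) = x'(v) z''(v) − x''(v) z'(v) and the parallel curvature k₂(v) = z'(v)/x(v), satisfy k₁(v) + k₂(v) = 2/(α+γ) for every v ∈ ℝ. -/

import Mathlib

open Real

/-- The incomplete elliptic integral of the first kind,
`F(φ, k) = ∫₀^φ (1 − k² sin²θ)^{−1/2} dθ`. -/
noncomputable def ellipticF (k φ : ℝ) : ℝ :=
  ∫ θ in (0:ℝ)..φ, (Real.sqrt (1 - k ^ 2 * Real.sin θ ^ 2))⁻¹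

/-- The incomplete elliptic integral of the second kind,
`E(φ, k) = ∫₀^φ (1 − k² sin²θ)^{1/2} dθ`. -/
noncomputable def ellipticE (k φ : ℝ) : ℝ :=
  ∫ θ in (0:ℝ)..φ, Real.sqrt (1 - k ^ 2 * Real.sin θ ^ 2)

lemma hasDerivAt_ellipticE (k : ℝ) (φ : ℝ) :
    HasDerivAt (ellipticE k) (Real.sqrt (1 - k ^ 2 * Real.sin φ ^ 2)) φ := by
  have hg : Continuous fun θ : ℝ => Real.sqrt (1 - k ^ 2 * Real.sin θ ^ 2) :=
    (continuous_const.sub (continuous_const.mul (Real.continuous_sin.pow 2))).sqrt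
  exact intervalIntegral.integral_hasDerivAt_right (hg.intervalIntegrable _ _)
    (hg.stronglyMeasurableAtFilter _ _) hg.continuousAt

lemma hasDerivAt_ellipticF (k : ℝ) (hk : ∀ θ : ℝ, 0 < 1 - k ^ 2 * Real.sin θ ^ 2) (φ : ℝ) :
    HasDerivAt (ellipticF k) ((Real.sqrt (1 - k ^ 2 * Real.sin φ ^ 2))⁻¹) φ := by
  have hg : Continuous fun θ : ℝ => Real.sqrt (1 - k ^ 2 * Real.sin θ ^ 2) :=
    (continuous_const.sub (continuous_const.mul (Real.continuous_sin.pow 2))).sqrt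
  have hf : Continuous fun θ : ℝ => (Real.sqrt (1 - k ^ 2 * Real.sin θ ^ 2))⁻¹ :=
    hg.inv₀ fun θ => (Real.sqrt_pos.2 (hk θ)).ne'
  exact intervalIntegral.integral_hasDerivAt_right (hf.intervalIntegrable _ _)
    (hf.stronglyMeasurableAtFilter _ _) hf.continuousAt


set_option maxHeartbeats 1000000 in
/-- The unduloid with parameters `0 < α < γ` has constant mean curvature: its principal
curvatures `k₁ = x'z'' − x''z'` (meridian) and `k₂ = z'/x` (parallel) satisfy
`k₁(v) + k₂(v) = 2/(α+γ)` for every `v`. -/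
theorem statement_12 (α γ : ℝ) (hα : 0 < α) (hαγ : α < γ)
    (μ β δ k : ℝ) (hμ : μ = 2 / (α + γ)) (hβ : β = (γ ^ 2 - α ^ 2) / 2)
    (hδ : δ = (γ ^ 2 + α ^ 2) / 2) (hk : k = Real.sqrt (γ ^ 2 - α ^ 2) / γ)
    (x z : ℝ → ℝ)
    (hx : ∀ v, x v = Real.sqrt (β * Real.sin (μ * v) + δ))
    (hz : ∀ v, z v = α * ellipticF k (μ * v / 2 - Real.pi / 4) +
      γ * ellipticE k (μ * v / 2 - Real.pi / 4)) :
    ∀ v : ℝ,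
      (deriv x v * deriv (deriv z) v - deriv (deriv x) v * deriv z v) +
        deriv z v / x v = 2 / (α + γ) := by
  have hγ : 0 < γ := hα.trans hαγ
  have hβpos : 0 < β := by rw [hβ]; nlinarith
  have hQpos : ∀ t : ℝ, 0 < β * Real.sin (μ * t) + δ := by
    intro t
    have h := Real.neg_one_le_sin (μ * t)
    rw [hβ, hδ] at *
    nlinarith
  have hk2 : k ^ 2 = (γ ^ 2 - α ^ 2) / γ ^ 2 := by
    rw [hk, div_pow, Real.sq_sqrt (by nlinarith)]
  have hkpos : ∀ θ : ℝ, 0 < 1 - k ^ 2 * Real.sin θ ^ 2 := by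
    intro θ
    have h1 : Real.sin θ ^ 2 ≤ 1 := Real.sin_sq_le_one θ
    have h2 : k ^ 2 < 1 := by
      rw [hk2, div_lt_one (by positivity)]; nlinarith
    nlinarith [sq_nonneg k, sq_nonneg (Real.sin θ)]
  have hkey : ∀ t : ℝ, 1 - k ^ 2 * Real.sin (μ * t / 2 - π / 4) ^ 2
      = (β * Real.sin (μ * t) + δ) / γ ^ 2 := by
    intro t
    have h1 : Real.sin (μ * t / 2 - π / 4) ^ 2
        = 1 / 2 - Real.cos (2 * (μ * t / 2 - π / 4)) / 2 := Real.sin_sq_eq_half_sub _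
    have h2 : Real.cos (2 * (μ * t / 2 - π / 4)) = Real.sin (μ * t) := by
      rw [show 2 * (μ * t / 2 - π / 4) = -(π / 2 - μ * t) by ring, Real.cos_neg,
        Real.cos_pi_div_two_sub]
    rw [h1, h2, hk2, hβ, hδ]
    field_simp
    ring
  have hsqQ : ∀ t : ℝ, Real.sqrt (1 - k ^ 2 * Real.sin (μ * t / 2 - π / 4) ^ 2)
      = Real.sqrt (β * Real.sin (μ * t) + δ) / γ := by
    intro t
    rw [hkey t, Real.sqrt_div (hQpos t).le, Real.sqrt_sq hγ.le]
  -- derivative of x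
  have hQd : ∀ t : ℝ, HasDerivAt (fun u : ℝ => β * Real.sin (μ * u) + δ)
      (β * (Real.cos (μ * t) * μ)) t := by
    intro t
    have h1 : HasDerivAt (fun u : ℝ => μ * u) μ t := by
      simpa using (hasDerivAt_id t).const_mul μ
    simpa using (h1.sin.const_mul β).add_const δ
  have hxd : ∀ t : ℝ, HasDerivAt x
      (β * μ * Real.cos (μ * t) / (2 * Real.sqrt (β * Real.sin (μ * t) + δ))) t := by
    intro t
    have hxfun : x = fun u : ℝ => Real.sqrt (β * Real.sin (μ * u) + δ) := funext hx
    rw [hxfun]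
    have h := (hQd t).sqrt (hQpos t).ne'
    convert h using 1
    ring
  have hx1 : deriv x = fun t => β * μ * Real.cos (μ * t) /
      (2 * Real.sqrt (β * Real.sin (μ * t) + δ)) := funext fun t => (hxd t).deriv
  -- derivative of z
  have hzd : ∀ t : ℝ, HasDerivAt z
      (μ * (α * γ + (β * Real.sin (μ * t) + δ)) /
        (2 * Real.sqrt (β * Real.sin (μ * t) + δ))) t := by
    intro t
    have hrt : 0 < Real.sqrt (β * Real.sin (μ * t) + δ) := Real.sqrt_pos.2 (hQpos t)
    have hφ : HasDerivAt (fun u : ℝ => μ * u / 2 - π / 4) (μ / 2) t := by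
      simpa using (((hasDerivAt_id t).const_mul μ).div_const 2).sub_const (π / 4)
    have hF := ((hasDerivAt_ellipticF k hkpos (μ * t / 2 - π / 4)).comp t hφ).const_mul α
    have hE := ((hasDerivAt_ellipticE k (μ * t / 2 - π / 4)).comp t hφ).const_mul γ
    have hsum := hF.add hE
    have hzfun : z = fun u : ℝ => α * ellipticF k (μ * u / 2 - π / 4)
        + γ * ellipticE k (μ * u / 2 - π / 4) := funext hz
    rw [hzfun]
    refine hsum.congr_deriv ?_
    symm
    rw [hsqQ t]
    have hrr : Real.sqrt (β * Real.sin (μ * t) + δ) * Real.sqrt (β * Real.sin (μ * t) + δ)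
        = β * Real.sin (μ * t) + δ := Real.mul_self_sqrt (hQpos t).le
    field_simp
    ring_nf
    linear_combination (-μ) * hrr
  have hz1 : deriv z = fun t => μ * (α * γ + (β * Real.sin (μ * t) + δ)) /
      (2 * Real.sqrt (β * Real.sin (μ * t) + δ)) := funext fun t => (hzd t).deriv
  intro v
  have hQv := hQpos v
  have hrv : 0 < Real.sqrt (β * Real.sin (μ * v) + δ) := Real.sqrt_pos.2 hQv
  have hμv : HasDerivAt (fun u : ℝ => μ * u) μ v := by
    simpa using (hasDerivAt_id v).const_mul μ
  have hD : HasDerivAt (fun t : ℝ => 2 * Real.sqrt (β * Real.sin (μ * t) + δ))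
      (2 * (β * (Real.cos (μ * v) * μ) / (2 * Real.sqrt (β * Real.sin (μ * v) + δ)))) v :=
    ((hQd v).sqrt hQv.ne').const_mul 2
  have hDne : (2 : ℝ) * Real.sqrt (β * Real.sin (μ * v) + δ) ≠ 0 := by positivity
  -- second derivative of x
  have hNx : HasDerivAt (fun t : ℝ => β * μ * Real.cos (μ * t))
      (β * μ * (-Real.sin (μ * v) * μ)) v := (hμv.cos).const_mul (β * μ)
  have hX2 := (hNx.div hD hDne)
  have hX2v : deriv (deriv x) v =
      (β * μ * (-Real.sin (μ * v) * μ) * (2 * Real.sqrt (β * Real.sin (μ * v) + δ)) -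
        β * μ * Real.cos (μ * v) *
          (2 * (β * (Real.cos (μ * v) * μ) / (2 * Real.sqrt (β * Real.sin (μ * v) + δ))))) /
      (2 * Real.sqrt (β * Real.sin (μ * v) + δ)) ^ 2 := by
    rw [hx1]; exact hX2.deriv
  -- second derivative of z
  have hNz : HasDerivAt (fun t : ℝ => μ * (α * γ + (β * Real.sin (μ * t) + δ)))
      (μ * (β * (Real.cos (μ * v) * μ))) v := by
    have := ((hQd v).const_add (α * γ)).const_mul μ
    simpa using this
  have hZ2 := (hNz.div hD hDne)
  have hZ2v : deriv (deriv z) v =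
      (μ * (β * (Real.cos (μ * v) * μ)) * (2 * Real.sqrt (β * Real.sin (μ * v) + δ)) -
        μ * (α * γ + (β * Real.sin (μ * v) + δ)) *
          (2 * (β * (Real.cos (μ * v) * μ) / (2 * Real.sqrt (β * Real.sin (μ * v) + δ))))) /
      (2 * Real.sqrt (β * Real.sin (μ * v) + δ)) ^ 2 := by
    rw [hz1]; exact hZ2.deriv
  have hX1v : deriv x v = β * μ * Real.cos (μ * v) /
      (2 * Real.sqrt (β * Real.sin (μ * v) + δ)) := (hxd v).deriv
  have hZ1v : deriv z v = μ * (α * γ + (β * Real.sin (μ * v) + δ)) /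
      (2 * Real.sqrt (β * Real.sin (μ * v) + δ)) := (hzd v).deriv
  have hrr : Real.sqrt (β * Real.sin (μ * v) + δ) * Real.sqrt (β * Real.sin (μ * v) + δ)
      = β * Real.sin (μ * v) + δ := Real.mul_self_sqrt hQv.le
  have hcs : Real.cos (μ * v) ^ 2 = 1 - Real.sin (μ * v) ^ 2 := Real.cos_sq' (μ * v)
  set s := Real.sin (μ * v) with hs
  set c := Real.cos (μ * v) with hc
  set r := Real.sqrt (β * s + δ) with hr
  obtain ⟨Q, hQdef⟩ : ∃ q : ℝ, q = β * s + δ := ⟨_, rfl⟩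
  rw [← hQdef] at hrr hQv hZ1v hZ2v
  have hrne : r ≠ 0 := hrv.ne'
  have hQne : Q ≠ 0 := hQv.ne'
  -- clean forms
  have hX1' : deriv x v = β * μ * c * r / (2 * Q) := by
    rw [hX1v, div_eq_div_iff (by positivity) (by positivity)]
    linear_combination (-(2 * β * μ * c)) * hrr
  have hZ1' : deriv z v = μ * (α * γ + Q) * r / (2 * Q) := by
    rw [hZ1v, div_eq_div_iff (by positivity) (by positivity)]
    linear_combination (-(2 * μ * (α * γ + Q))) * hrr
  have hk2' : deriv z v / x v = μ * (α * γ + Q) / (2 * Q) := by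
    rw [hZ1v, hx v, ← hr, div_div, mul_assoc, hrr]
  have hX2' : deriv (deriv x) v
      = -(β * μ ^ 2 * (2 * s * Q + β * c ^ 2) * r) / (4 * Q ^ 2) := by
    rw [hX2v]
    field_simp
    ring_nf
    linear_combination (4*μ^2*(2*s*Q*r^2 + β*c^2*(r^2+Q))) * hrr
  have hZ2' : deriv (deriv z) v
      = β * μ ^ 2 * c * (Q - α * γ) * r / (4 * Q ^ 2) := by
    rw [hZ2v]
    field_simp
    ring_nf
    linear_combination (4*μ^2*c*(α*γ*(r^2+Q) - Q*(r^2 - Q))) * hrr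
  have hk1' : deriv x v * deriv (deriv z) v - deriv (deriv x) v * deriv z v
      = μ ^ 3 * β * (β * (1 - s ^ 2) + s * (α * γ + Q)) / (4 * Q) := by
    rw [hX1', hZ1', hX2', hZ2']
    field_simp
    ring_nf
    linear_combination (2*μ^3*Q*(β*c^2 + s*(α*γ+Q))) * hrr + (2*μ^3*Q^2*β) * hcs
  have h1 : μ ^ 2 * β * (β * (1 - s ^ 2) + s * (α * γ + Q)) +
      2 * (α * γ + Q) = 4 * Q := by
    have hαγ0 : α + γ ≠ 0 := by positivity
    rw [hQdef, hμ, hβ, hδ]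
    field_simp
    ring
  have h2 : μ ^ 3 * β * (β * (1 - s ^ 2) + s * (α * γ + Q)) / (4 * Q) +
      μ * (α * γ + Q) / (2 * Q)
      = μ * (μ ^ 2 * β * (β * (1 - s ^ 2) + s * (α * γ + Q)) + 2 * (α * γ + Q)) / (4 * Q) := by
    field_simp
    ring
  rw [hk1', hk2', h2, h1, mul_div_assoc, div_self (by positivity), mul_one, hμ]
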